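/- Fix reals u < 0 and a < 0 with u ≠ a, and for β > 0 define G_{a,β}(u) := log((1+e^{βu})/(1+e^{βa})) + e^{βa}·log((1+e^{−βu})/(1+e^{−βa})). Then lim_{β→∞} G_{a,β}(u) / [e^{βa}(e^{β(u−a)} − 1 − β(u−a))] = 1. In particular G_{a,β}(u) decreases exponentially fast in β in this regime. -/

import Mathlib

open scoped BigOperators Topology Classical
open Real MeasureTheory Filter

/-- The function `G_a(u) = log((1+e^{βu})/(1+e^{βa})) + e^{βa}·log((1+e^{-βu})/(1+e^{-βa}))`. -/
noncomputable def Gfun (β a u : ℝ) : ℝ :=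
  Real.log ((1 + Real.exp (β * u)) / (1 + Real.exp (β * a)))
    + Real.exp (β * a) * Real.log ((1 + Real.exp (-(β * u))) / (1 + Real.exp (-(β * a))))

lemma log_one_add_le {t : ℝ} (ht : 0 ≤ t) : Real.log (1 + t) ≤ t := by
  have := Real.log_le_sub_one_of_pos (show (0:ℝ) < 1 + t by linarith)
  linarith

lemma le_log_one_add {t : ℝ} (ht : 0 ≤ t) : t - t ^ 2 ≤ Real.log (1 + t) := by
  have h1 : (0:ℝ) < 1 + t := by linarith
  have h2 := Real.log_le_sub_one_of_pos (show (0:ℝ) < (1 + t)⁻¹ by positivity)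
  rw [Real.log_inv] at h2
  have h4 : t / (1 + t) ≤ Real.log (1 + t) := by
    have : (1 + t)⁻¹ - 1 = -(t / (1 + t)) := by field_simp; ring
    linarith [this ▸ h2]
  have h5 : t - t ^ 2 ≤ t / (1 + t) := by
    rw [le_div_iff₀ h1]; nlinarith
  linarith

lemma log_one_add_exp (s : ℝ) :
    Real.log (1 + Real.exp (-s)) = -s + Real.log (1 + Real.exp s) := by
  have h : 1 + Real.exp (-s) = Real.exp (-s) * (1 + Real.exp s) := by
    rw [mul_add, mul_one, ← Real.exp_add]; simp [add_comm]
  rw [h, Real.log_mul (Real.exp_ne_zero _) (by positivity), Real.log_exp]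

lemma Gfun_eq (β a u : ℝ) :
    Gfun β a u = (1 + Real.exp (β * a)) *
      (Real.log (1 + Real.exp (β * u)) - Real.log (1 + Real.exp (β * a)))
      + β * (a - u) * Real.exp (β * a) := by
  unfold Gfun
  rw [Real.log_div (by positivity) (by positivity),
    Real.log_div (by positivity) (by positivity),
    log_one_add_exp (β * u), log_one_add_exp (β * a)]
  ring

lemma Den_eq (β a u : ℝ) :
    Real.exp (β * a) * (Real.exp (β * (u - a)) - 1 - β * (u - a))
      = Real.exp (β * u) - Real.exp (β * a) - β * (u - a) * Real.exp (β * a) := by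
  have h1 : Real.exp (β * a) * Real.exp (β * (u - a)) = Real.exp (β * u) := by
    rw [← Real.exp_add]; ring_nf
  linear_combination h1

/-- For fixed `u < 0`, `a < 0`, `u ≠ a`,
`G_{a,β}(u) / (e^{βa}(e^{β(u-a)} - 1 - β(u-a))) → 1` as `β → ∞`. -/
theorem stmt_10 (u a : ℝ) (hu : u < 0) (ha : a < 0) (hne : u ≠ a) :
    Filter.Tendsto
      (fun β : ℝ => Gfun β a u /
        (Real.exp (β * a) * (Real.exp (β * (u - a)) - 1 - β * (u - a))))
      Filter.atTop (𝓝 1) := by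
  have hmax : max u a < 0 := max_lt hu ha
  have key : Tendsto (fun β : ℝ => Gfun β a u /
      (Real.exp (β * a) * (Real.exp (β * (u - a)) - 1 - β * (u - a))) - 1)
      atTop (𝓝 0) := by
    apply squeeze_zero_norm' (a := fun β : ℝ => 12 * Real.exp (β * max u a))
    · -- eventual bound
      -- generic setup lemma per β given hypotheses
      have main : ∀ β : ℝ, 0 ≤ β →
          Real.exp (β * u) - Real.exp (β * a) - β * (u - a) * Real.exp (β * a)
            ≥ max (Real.exp (β * u)) (Real.exp (β * a)) / 2 →
          ‖Gfun β a u /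
            (Real.exp (β * a) * (Real.exp (β * (u - a)) - 1 - β * (u - a))) - 1‖
            ≤ 12 * Real.exp (β * max u a) := by
        intro β hβ hD
        set x := Real.exp (β * u) with hxdef
        set y := Real.exp (β * a) with hydef
        set D := x - y - β * (u - a) * y with hDdef
        have hx0 : 0 < x := Real.exp_pos _
        have hy0 : 0 < y := Real.exp_pos _
        have hx1 : x ≤ 1 := by
          rw [hxdef, ← Real.exp_zero]; exact Real.exp_le_exp.2 (by nlinarith)
        have hy1 : y ≤ 1 := by
          rw [hydef, ← Real.exp_zero]; exact Real.exp_le_exp.2 (by nlinarith)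
        have hm : max x y = Real.exp (β * max u a) := by
          rcases le_total u a with h | h
          · rw [max_eq_right h, hxdef, hydef,
              max_eq_right (Real.exp_le_exp.2 (by nlinarith))]
          · rw [max_eq_left h, hxdef, hydef,
              max_eq_left (Real.exp_le_exp.2 (by nlinarith))]
        set M := max x y with hMdef
        have hM0 : 0 < M := lt_max_of_lt_left hx0
        have hM1 : M ≤ 1 := max_le hx1 hy1
        have hxM : x ≤ M := le_max_left _ _
        have hyM : y ≤ M := le_max_right _ _
        have hD2 : M / 2 ≤ D := hD
        have hD0 : 0 < D := lt_of_lt_of_le (by linarith) hD2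
        -- bound on |G - D|
        have hfx1 : Real.log (1 + x) ≤ x := log_one_add_le hx0.le
        have hfx2 : x - x ^ 2 ≤ Real.log (1 + x) := le_log_one_add hx0.le
        have hfy1 : Real.log (1 + y) ≤ y := log_one_add_le hy0.le
        have hfy2 : y - y ^ 2 ≤ Real.log (1 + y) := le_log_one_add hy0.le
        have hGD : |Gfun β a u - D| ≤ 3 * M ^ 2 := by
          set fx := x - Real.log (1 + x) with hfxdef
          set fy := y - Real.log (1 + y) with hfydef
          have hx2M : x ^ 2 ≤ M ^ 2 := pow_le_pow_left₀ hx0.le hxM 2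
          have hy2M : y ^ 2 ≤ M ^ 2 := pow_le_pow_left₀ hy0.le hyM 2
          have hfx0 : 0 ≤ fx := by rw [hfxdef]; linarith
          have hfxM : fx ≤ M ^ 2 := by
            have : fx ≤ x ^ 2 := by rw [hfxdef]; linarith
            linarith
          have hfy0 : 0 ≤ fy := by rw [hfydef]; linarith
          have hfyM : fy ≤ M ^ 2 := by
            have : fy ≤ y ^ 2 := by rw [hfydef]; linarith
            linarith
          have hyfx0 : 0 ≤ y * fx := mul_nonneg hy0.le hfx0
          have hyfxM : y * fx ≤ M ^ 2 := by
            calc y * fx ≤ 1 * fx := mul_le_mul_of_nonneg_right hy1 hfx0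
              _ = fx := one_mul _
              _ ≤ M ^ 2 := hfxM
          have hyfy0 : 0 ≤ y * fy := mul_nonneg hy0.le hfy0
          have hyfyM : y * fy ≤ M ^ 2 := by
            calc y * fy ≤ 1 * fy := mul_le_mul_of_nonneg_right hy1 hfy0
              _ = fy := one_mul _
              _ ≤ M ^ 2 := hfyM
          have hyxM : y * x ≤ M ^ 2 := by
            calc y * x ≤ M * M := mul_le_mul hyM hxM hx0.le hM0.le
              _ = M ^ 2 := (sq M).symm
          have hyx0 : 0 ≤ y * x := by positivity
          have hid : Gfun β a u - D
              = y * x - y ^ 2 - fx - y * fx + fy + y * fy := by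
            rw [hfxdef, hfydef, Gfun_eq, hDdef]; ring
          rw [hid, abs_le]
          have hy20 : 0 ≤ y ^ 2 := sq_nonneg y
          constructor
          · linarith
          · linarith
        -- conclude
        have hDen : Real.exp (β * a) * (Real.exp (β * (u - a)) - 1 - β * (u - a)) = D := by
          rw [Den_eq]
        rw [hDen, ← hm]
        have h1 : Gfun β a u / D - 1 = (Gfun β a u - D) / D := by
          field_simp
        rw [h1, Real.norm_eq_abs, abs_div, abs_of_pos hD0, div_le_iff₀ hD0]
        calc |Gfun β a u - D| ≤ 3 * M ^ 2 := hGD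
          _ ≤ 12 * M * (M / 2) := by nlinarith [sq_nonneg M]
          _ ≤ 12 * M * D := by
              have h12 : (0:ℝ) ≤ 12 * M := by positivity
              exact mul_le_mul_of_nonneg_left hD2 h12
      -- now establish the eventual hypothesis on D
      have hDev : ∀ᶠ β : ℝ in atTop,
          Real.exp (β * u) - Real.exp (β * a) - β * (u - a) * Real.exp (β * a)
            ≥ max (Real.exp (β * u)) (Real.exp (β * a)) / 2 := by
        rcases lt_or_gt_of_ne hne with h | h
        · -- u < a : D = x - y + β(a-u) y ≥ ... M = y eventually
          have hc : 0 < a - u := by linarith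
          have E1 : ∀ᶠ β : ℝ in atTop, 2 ≤ β * (a - u) :=
            (tendsto_id.atTop_mul_const hc).eventually_ge_atTop 2
          filter_upwards [E1, eventually_ge_atTop 0] with β h1 h2
          have hxy : Real.exp (β * u) ≤ Real.exp (β * a) :=
            Real.exp_le_exp.2 (by nlinarith)
          rw [max_eq_right hxy]
          have hy0 : 0 < Real.exp (β * a) := Real.exp_pos _
          have hx0 : 0 < Real.exp (β * u) := Real.exp_pos _
          nlinarith
        · -- a < u : D = x - y(1 + β(u-a)) ≥ x/2 eventually
          have hc : 0 < u - a := by linarith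
          have hT : Tendsto (fun β : ℝ => Real.exp (β * (a - u)) * (1 + β * (u - a)))
              atTop (𝓝 0) := by
            have h1 : Tendsto (fun β : ℝ => Real.exp (β * (a - u))) atTop (𝓝 0) := by
              apply Real.tendsto_exp_atBot.comp
              exact tendsto_id.atTop_mul_const_of_neg (by linarith)
            have h2 : Tendsto (fun β : ℝ => (β * (u - a)) * Real.exp (-(β * (u - a))))
                atTop (𝓝 0) := by
              have := (Real.tendsto_pow_mul_exp_neg_atTop_nhds_zero 1).comp
                (tendsto_id.atTop_mul_const hc)
              simpa [Function.comp_def] using this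
            have := h1.add h2
            simp only [add_zero] at this
            apply this.congr
            intro β
            have : Real.exp (-(β * (u - a))) = Real.exp (β * (a - u)) := by ring_nf
            rw [this]; ring
          have E1 : ∀ᶠ β : ℝ in atTop,
              Real.exp (β * (a - u)) * (1 + β * (u - a)) < 1 / 2 :=
            hT.eventually_lt_const (by norm_num)
          filter_upwards [E1, eventually_ge_atTop 0] with β h1 h2
          have hxy : Real.exp (β * a) ≤ Real.exp (β * u) :=
            Real.exp_le_exp.2 (by nlinarith)
          rw [max_eq_left hxy]
          have hx0 : 0 < Real.exp (β * u) := Real.exp_pos _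
          have key2 : Real.exp (β * a) * (1 + β * (u - a)) < Real.exp (β * u) / 2 := by
            have hh : Real.exp (β * a) = Real.exp (β * u) * Real.exp (β * (a - u)) := by
              rw [← Real.exp_add]; ring_nf
            rw [hh]
            calc Real.exp (β * u) * Real.exp (β * (a - u)) * (1 + β * (u - a))
                = Real.exp (β * u) * (Real.exp (β * (a - u)) * (1 + β * (u - a))) := by ring
              _ < Real.exp (β * u) * (1 / 2) := by
                  apply mul_lt_mul_of_pos_left h1 hx0
              _ = Real.exp (β * u) / 2 := by ring
          nlinarith
      filter_upwards [hDev, eventually_ge_atTop 0] with β h1 h2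
      exact main β h2 h1
    · -- 12 * exp(β * max u a) → 0
      have h1 : Tendsto (fun β : ℝ => Real.exp (β * max u a)) atTop (𝓝 0) := by
        apply Real.tendsto_exp_atBot.comp
        exact tendsto_id.atTop_mul_const_of_neg hmax
      simpa using h1.const_mul 12
  have := key.add_const 1
  simpa using this
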